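/- Fix a preorder α, let ℕ∞ = WithTop ℕ and ℕ₁∞ = {n : ℕ∞ // 1 ≤ n}, and consider lower sets of the preorder PUnit ⊕ (α × ℕ₁∞). Define size X = ⨆ { (n : ℕ∞) | ∃ a : α, Sum.inr (a, n) ∈ X }, the list constructor Cons X = 1 + size X (an element of ℕ₁∞), and the destructor Dest x = sSup { X : LowerSet (PUnit ⊕ (α × ℕ₁∞)) | Cons X ≤ x } for x : ℕ₁∞, the supremum being union of lower sets. Then for every x : ℕ₁∞, Dest x equals, as a subset of PUnit ⊕ (α × ℕ₁∞), the set { Sum.inl u | u : PUnit } ∪ { Sum.inr (a, n) | a : α, n : ℕ₁∞, 1 + (n : ℕ∞) ≤ (x : ℕ∞) }. In particular Dest 1 consists exactly of the element Sum.inl PUnit.unit. -/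

import Mathlib

/-- `ℕ₁∞`: extended naturals that are at least 1 (sizes of inductive values). -/
abbrev Nat1Inf : Type := {n : WithTop ℕ // 1 ≤ n}

/-- The size of the data from which a list is constructed: the supremum of the
sizes of the tails occurring in the lower set `X`. -/
noncomputable def listSize {α : Type*} [Preorder α]
    (X : LowerSet (PUnit ⊕ (α × Nat1Inf))) : WithTop ℕ :=
  ⨆ n ∈ {n : Nat1Inf | ∃ a : α, Sum.inr (a, n) ∈ X}, (n : WithTop ℕ)

/-- The semantic list constructor in the constructor-counting model. -/
noncomputable def listCons {α : Type*} [Preorder α]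
    (X : LowerSet (PUnit ⊕ (α × Nat1Inf))) : Nat1Inf :=
  ⟨1 + listSize X, le_add_of_nonneg_right zero_le⟩

/-- The semantic list destructor in the constructor-counting model. -/
noncomputable def listDest {α : Type*} [Preorder α] (x : Nat1Inf) :
    LowerSet (PUnit ⊕ (α × Nat1Inf)) :=
  sSup {X : LowerSet (PUnit ⊕ (α × Nat1Inf)) | listCons X ≤ x}

theorem main_char {α : Type*} [Preorder α] (x : Nat1Inf) :
    (listDest (α := α) x : Set (PUnit ⊕ (α × Nat1Inf))) =
        {s | ∃ u : PUnit, s = Sum.inl u} ∪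
        {s | ∃ (a : α) (n : Nat1Inf),
          s = Sum.inr (a, n) ∧ 1 + (n : WithTop ℕ) ≤ (x : WithTop ℕ)} := by
  ext s
  rw [SetLike.mem_coe, listDest, LowerSet.mem_sSup_iff]
  constructor
  · rintro ⟨X, hX, hs⟩
    cases s with
    | inl u => exact Or.inl ⟨u, rfl⟩
    | inr p =>
      obtain ⟨a, n⟩ := p
      refine Or.inr ⟨a, n, rfl, ?_⟩
      have hn : (n : WithTop ℕ) ≤ listSize X := by
        apply le_biSup (f := fun n : Nat1Inf => (n : WithTop ℕ))
        exact ⟨a, hs⟩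
      calc 1 + (n : WithTop ℕ) ≤ 1 + listSize X := by gcongr
        _ ≤ x := hX
  · rintro (⟨u, rfl⟩ | ⟨a, n, rfl, hn⟩)
    · -- X = all inl's
      have hls : IsLowerSet {s : PUnit ⊕ (α × Nat1Inf) | ∃ u, s = Sum.inl u} := by
        rintro s t hts ⟨v, rfl⟩
        cases t with
        | inl w => exact ⟨w, rfl⟩
        | inr p => exact absurd hts (by simp)
      refine ⟨⟨{s | ∃ u, s = Sum.inl u}, hls⟩, ?_, ⟨u, rfl⟩⟩
      show listCons _ ≤ x
      have hsize : listSize (α := α) ⟨{s | ∃ u, s = Sum.inl u}, hls⟩ = 0 := by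
        simp [listSize]
      refine Subtype.coe_le_coe.mp ?_
      show 1 + listSize _ ≤ (x : WithTop ℕ)
      rw [hsize, add_zero]
      exact x.2
    · have hls : IsLowerSet {s : PUnit ⊕ (α × Nat1Inf) |
          (∃ u, s = Sum.inl u) ∨ ∃ p : α × Nat1Inf, s = Sum.inr p ∧ p ≤ (a, n)} := by
        rintro s t hts (⟨v, rfl⟩ | ⟨p, rfl, hp⟩)
        · cases t with
          | inl w => exact Or.inl ⟨w, rfl⟩
          | inr q => exact absurd hts (by simp)
        · cases t with
          | inl w => exact absurd hts (by simp)
          | inr q =>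
            refine Or.inr ⟨q, rfl, le_trans ?_ hp⟩
            simpa using hts
      refine ⟨⟨_, hls⟩, ?_, Or.inr ⟨(a, n), rfl, le_refl _⟩⟩
      show listCons _ ≤ x
      refine Subtype.coe_le_coe.mp ?_
      show 1 + listSize _ ≤ (x : WithTop ℕ)
      refine le_trans ?_ hn
      gcongr
      apply iSup₂_le
      rintro m ⟨b, (⟨v, hv⟩ | ⟨p, hp, hple⟩)⟩
      · exact absurd hv (by simp)
      · have : (b, m) = p := by simpa [eq_comm] using hp
        subst this
        exact_mod_cast hple.2

theorem stmt_9 {α : Type*} [Preorder α] :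
    (∀ x : Nat1Inf,
      (listDest (α := α) x : Set (PUnit ⊕ (α × Nat1Inf))) =
        {s | ∃ u : PUnit, s = Sum.inl u} ∪
        {s | ∃ (a : α) (n : Nat1Inf),
          s = Sum.inr (a, n) ∧ 1 + (n : WithTop ℕ) ≤ (x : WithTop ℕ)}) ∧
    (listDest (α := α) ⟨1, le_refl 1⟩ : Set (PUnit ⊕ (α × Nat1Inf))) =
      {Sum.inl PUnit.unit} := by
  refine ⟨main_char, ?_⟩
  rw [main_char]
  ext s
  simp only [Set.mem_union, Set.mem_setOf_eq, Set.mem_singleton_iff]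
  constructor
  · rintro (⟨u, rfl⟩ | ⟨a, n, rfl, hn⟩)
    · rfl
    · exfalso
      have h1 : (1 : WithTop ℕ) ≤ (n : WithTop ℕ) := n.2
      have : (2 : WithTop ℕ) ≤ 1 := le_trans (by
        calc (2 : WithTop ℕ) = 1 + 1 := by norm_num
          _ ≤ 1 + (n : WithTop ℕ) := by gcongr) hn
      norm_num at this
  · rintro rfl
    exact Or.inl ⟨PUnit.unit, rfl⟩
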